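/- Let (X,d) be a metric space and let M be a positive integer such that for every x ∈ X and every r > 0, any subset of the closed ball B^cl(x,r) whose distinct points are at pairwise distance strictly greater than r has cardinality at most M. Let μ be a Borel measure on X that is finite on every bounded Borel set and positive on every nonempty open set. Then for every s > 0 and every f ∈ L^1(μ), ‖A_s f‖_{L^1(μ)} ≤ M ‖f‖_{L^1(μ)}. -/

import Mathlib

open MeasureTheory Metric ENNReal

/-- The averaging operator `A_s f(x) = (1/μ(B^cl(x,s))) ∫_{B^cl(x,s)} f dμ`
over closed balls. -/
noncomputable def avgOp {X : Type*} [MetricSpace X] [MeasurableSpace X]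
    (μ : Measure X) (r : ℝ) (f : X → ℝ) (x : X) : ℝ :=
  (μ (closedBall x r)).toReal⁻¹ * ∫ y in closedBall x r, f y ∂μ

/-- Greedy/induction core: if every strictly `s`-separated finite subset of `T` has at most
`k` points and the ball measure function is bounded below by `δ > 0` on `T`, then
`∫⁻_T μ(B(x,s))⁻¹ ≤ k (1+ε)`. -/
private lemma avg_keyLemma {X : Type*} [MetricSpace X] [MeasurableSpace X] [BorelSpace X]
    (μ : Measure X) (s : ℝ) (hs : 0 ≤ s)
    (hfin : ∀ t : Set X, Bornology.IsBounded t → μ t < ⊤)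
    (δ ε : ℝ≥0∞) (hδ : δ ≠ 0) (hε : ε ≠ 0) :
    ∀ (k : ℕ) (T : Set X), MeasurableSet T →
      (∀ t : Finset X, (↑t : Set X) ⊆ T →
        (∀ a ∈ t, ∀ b ∈ t, a ≠ b → s < dist a b) → t.card ≤ k) →
      (∀ x ∈ T, δ ≤ μ (closedBall x s)) →
      ∫⁻ x in T, (μ (closedBall x s))⁻¹ ∂μ ≤ k * (1 + ε) := by
  intro k
  induction k with
  | zero =>
    intro T hTm hsep _
    have hT : T = ∅ := by
      rw [Set.eq_empty_iff_forall_notMem]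
      intro x hx
      have := hsep {x} (by simpa using hx) (by simp)
      simp at this
    simp [hT]
  | succ k ih =>
    classical
    intro T hTm hsep hlow
    rcases T.eq_empty_or_nonempty with rfl | ⟨x₀, hx₀⟩
    · simp
    set g : X → ℝ≥0∞ := fun x => μ (closedBall x s) with hg
    set m : ℝ≥0∞ := ⨅ x ∈ T, g x with hm
    have hmδ : δ ≤ m := le_iInf₂ fun x hx => hlow x hx
    have hm0 : m ≠ 0 := fun h => hδ (le_antisymm (h ▸ hmδ) (zero_le))
    have hmtop : m ≠ ⊤ :=
      ne_top_of_le_ne_top (hfin _ isBounded_closedBall).ne (iInf₂_le x₀ hx₀)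
    have hlt : m < m * (1 + ε) := by
      rw [mul_add, mul_one]
      exact ENNReal.lt_add_right hmtop (by simp [hm0, hε])
    obtain ⟨x₁, hx₁T, hgx₁⟩ : ∃ x ∈ T, g x < m * (1 + ε) := by
      by_contra h
      push_neg at h
      exact hlt.not_ge (le_iInf₂ h)
    have hB₁ : MeasurableSet (closedBall x₁ s) := measurableSet_closedBall
    have hunion : ∫⁻ x in T, (g x)⁻¹ ∂μ
        = ∫⁻ x in T ∩ closedBall x₁ s, (g x)⁻¹ ∂μ
          + ∫⁻ x in T \ closedBall x₁ s, (g x)⁻¹ ∂μ := by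
      rw [← lintegral_union (hTm.diff hB₁)
        (Set.disjoint_sdiff_right.mono_left Set.inter_subset_right), Set.inter_union_diff]
    have h1 : ∫⁻ x in T ∩ closedBall x₁ s, (g x)⁻¹ ∂μ ≤ 1 + ε := by
      have hmono : ∫⁻ x in T ∩ closedBall x₁ s, (g x)⁻¹ ∂μ
          ≤ ∫⁻ _ in T ∩ closedBall x₁ s, m⁻¹ ∂μ :=
        setLIntegral_mono measurable_const fun x hx => ENNReal.inv_le_inv' (iInf₂_le x hx.1)
      rw [setLIntegral_const] at hmono
      calc ∫⁻ x in T ∩ closedBall x₁ s, (g x)⁻¹ ∂μ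
          ≤ m⁻¹ * μ (T ∩ closedBall x₁ s) := hmono
        _ ≤ m⁻¹ * g x₁ := mul_le_mul_right (measure_mono Set.inter_subset_right) _
        _ ≤ m⁻¹ * (m * (1 + ε)) := mul_le_mul_right hgx₁.le _
        _ = 1 + ε := by rw [← mul_assoc, ENNReal.inv_mul_cancel hm0 hmtop, one_mul]
    have h2 : ∫⁻ x in T \ closedBall x₁ s, (g x)⁻¹ ∂μ ≤ k * (1 + ε) := by
      refine ih (T \ closedBall x₁ s) (hTm.diff hB₁) ?_ fun x hx => hlow x hx.1
      intro t ht hsep'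
      have hx₁t : x₁ ∉ t := fun hmem => (ht hmem).2 (mem_closedBall_self hs)
      have hsub : (↑(insert x₁ t) : Set X) ⊆ T := by
        intro a ha
        rcases Finset.mem_insert.mp ha with rfl | ha'
        · exact hx₁T
        · exact (ht ha').1
      have hsep'' : ∀ a ∈ insert x₁ t, ∀ b ∈ insert x₁ t, a ≠ b → s < dist a b := by
        intro a ha b hb hab
        rcases Finset.mem_insert.mp ha with rfl | ha' <;>
          rcases Finset.mem_insert.mp hb with rfl | hb'
        · exact absurd rfl hab
        · have : b ∉ closedBall a s := (ht hb').2
          rw [mem_closedBall, not_le] at this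
          rwa [dist_comm]
        · have : a ∉ closedBall b s := (ht ha').2
          rwa [mem_closedBall, not_le] at this
        · exact hsep' a ha' b hb' hab
      have hcard := hsep (insert x₁ t) hsub hsep''
      rw [Finset.card_insert_of_notMem hx₁t] at hcard
      omega
    calc ∫⁻ x in T, (g x)⁻¹ ∂μ
        = _ + _ := hunion
      _ ≤ (1 + ε) + k * (1 + ε) := add_le_add h1 h2
      _ = (k + 1 : ℕ) * (1 + ε) := by push_cast; ring

private lemma avg_sigmaFinite {X : Type*} [MetricSpace X] [MeasurableSpace X]
    (μ : Measure X) [Nonempty X]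
    (hfin : ∀ t : Set X, Bornology.IsBounded t → μ t < ⊤) : SigmaFinite μ := by
  let x₀ : X := Classical.arbitrary X
  exact ⟨⟨⟨fun n => closedBall x₀ n, fun _ => Set.mem_univ _,
    fun n => hfin _ isBounded_closedBall, iUnion_closedBall_nat x₀⟩⟩⟩

private lemma avg_secondCountable {X : Type*} [MetricSpace X] [MeasurableSpace X]
    [OpensMeasurableSpace X]
    (μ : Measure X) [SFinite μ]
    (hpos : ∀ U : Set X, IsOpen U → U.Nonempty → 0 < μ U) :
    SecondCountableTopology X := by
  refine Metric.secondCountable_of_almost_dense_set fun ε hε => ?_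
  obtain ⟨S, hSP, hSmax⟩ :
      ∃ S, S ∈ {S : Set X | ∀ a ∈ S, ∀ b ∈ S, a ≠ b → ε / 2 < dist a b} ∧
        ∀ ⦃T⦄, T ∈ {S : Set X | ∀ a ∈ S, ∀ b ∈ S, a ≠ b → ε / 2 < dist a b} → S ⊆ T → T ⊆ S := by
    have hch : ∀ c ⊆ {S : Set X | ∀ a ∈ S, ∀ b ∈ S, a ≠ b → ε / 2 < dist a b},
        IsChain (· ⊆ ·) c → ∃ ub ∈ {S : Set X | ∀ a ∈ S, ∀ b ∈ S, a ≠ b → ε / 2 < dist a b},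
          ∀ s ∈ c, s ⊆ ub := by
      intro c hc hchain
      refine ⟨⋃₀ c, ?_, fun s hs => Set.subset_sUnion_of_mem hs⟩
      rintro a ⟨sa, hsa, ha⟩ b ⟨sb, hsb, hb⟩ hab
      rcases hchain.total hsa hsb with h | h
      · exact hc hsb a (h ha) b hb hab
      · exact hc hsa a ha b (h hb) hab
    obtain ⟨S, hS⟩ := zorn_subset _ hch
    exact ⟨S, hS.1, fun T hT hST => hS.2 hT hST⟩
  have hdisj : Pairwise (Function.onFun Disjoint fun p : S => ball (p : X) (ε / 4)) := by
    intro p q hpq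
    have hne : (p : X) ≠ (q : X) := Subtype.coe_injective.ne hpq
    have hd : ε / 2 < dist (p : X) (q : X) := hSP _ p.2 _ q.2 hne
    exact ball_disjoint_ball (by linarith)
  have hcnt : Set.Countable {i : S | 0 < μ (ball (i : X) (ε / 4))} :=
    MeasureTheory.Measure.countable_meas_pos_of_disjoint_iUnion
      (fun _ => measurableSet_ball) hdisj
  have huniv : {i : S | 0 < μ (ball (i : X) (ε / 4))} = Set.univ := by
    ext i
    simp only [Set.mem_setOf_eq, Set.mem_univ, iff_true]
    exact hpos _ isOpen_ball ⟨_, mem_ball_self (by linarith)⟩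
  rw [huniv] at hcnt
  have hScnt : S.Countable := by
    rw [Set.countable_coe_iff.symm]
    exact (Set.countable_univ_iff.mp hcnt)
  refine ⟨S, hScnt, fun x => ?_⟩
  by_contra h
  push_neg at h
  have hxS : x ∉ S := fun hx => absurd (h x hx) (by simp only [dist_self]; linarith)
  have hins : insert x S ∈
      {S : Set X | ∀ a ∈ S, ∀ b ∈ S, a ≠ b → ε / 2 < dist a b} := by
    rintro a (rfl | ha) b (rfl | hb) hab
    · exact absurd rfl hab
    · have := h b hb
      linarith
    · have := h a ha
      rw [dist_comm]
      linarith
    · exact hSP a ha b hb hab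
  exact hxS (hSmax hins (Set.subset_insert x S) (Set.mem_insert x S))

private lemma avg_gMeas {X : Type*} [MetricSpace X] [MeasurableSpace X] [BorelSpace X]
    [SecondCountableTopology X]
    (μ : Measure X) [SFinite μ] (s : ℝ) :
    Measurable fun x => μ (closedBall x s) := by
  have hcl : MeasurableSet {p : X × X | dist p.2 p.1 ≤ s} :=
    (isClosed_le (continuous_snd.dist continuous_fst) continuous_const).measurableSet
  exact measurable_measure_prodMk_left (ν := μ) hcl

private lemma avg_Kbound {X : Type*} [MetricSpace X] [MeasurableSpace X] [BorelSpace X]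
    [SecondCountableTopology X]
    (μ : Measure X) [SFinite μ] (M : ℕ) (hM : 0 < M) (s : ℝ) (hs : 0 < s)
    (hfin : ∀ t : Set X, Bornology.IsBounded t → μ t < ⊤)
    (hpos : ∀ U : Set X, IsOpen U → U.Nonempty → 0 < μ U)
    (y : X)
    (hnet : ∀ t : Finset X, (↑t : Set X) ⊆ closedBall y s →
      (∀ a ∈ t, ∀ b ∈ t, a ≠ b → s < dist a b) → t.card ≤ M) :
    ∫⁻ x in closedBall y s, (μ (closedBall x s))⁻¹ ∂μ ≤ M := by
  have hgm : Measurable fun x => μ (closedBall x s) := avg_gMeas μ s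
  set T : ℕ → Set X := fun n => closedBall y s ∩ {x | (n : ℝ≥0∞)⁻¹ ≤ μ (closedBall x s)}
    with hT
  have hTm : ∀ n, MeasurableSet (T n) := fun n =>
    measurableSet_closedBall.inter (hgm measurableSet_Ici)
  have hTmono : Monotone T := fun a b hab =>
    Set.inter_subset_inter_right _ fun x hx =>
      le_trans (ENNReal.inv_le_inv' (Nat.cast_le.mpr hab)) hx
  have hUnion : closedBall y s ⊆ ⋃ n, T n := by
    intro x hx
    have h0 : μ (closedBall x s) ≠ 0 :=
      (lt_of_lt_of_le (hpos (ball x s) isOpen_ball ⟨x, mem_ball_self hs⟩)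
        (measure_mono ball_subset_closedBall)).ne'
    obtain ⟨n, hn⟩ := ENNReal.exists_inv_nat_lt h0
    exact Set.mem_iUnion.mpr ⟨n, hx, hn.le⟩
  have hTn : ∀ n, ∫⁻ x in T n, (μ (closedBall x s))⁻¹ ∂μ ≤ M := by
    intro n
    refine ENNReal.le_of_forall_pos_le_add fun ε hε _ => ?_
    have hMne : (M : ℝ≥0∞) ≠ 0 := Nat.cast_ne_zero.mpr hM.ne'
    have hMnt : (M : ℝ≥0∞) ≠ ⊤ := ENNReal.natCast_ne_top M
    have hε' : (ε : ℝ≥0∞) / M ≠ 0 := by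
      simp [ENNReal.div_eq_top, ENNReal.div_ne_zero, hε.ne', hMnt]
    have hkey := avg_keyLemma μ s hs.le hfin ((n : ℝ≥0∞))⁻¹ ((ε : ℝ≥0∞) / M)
      (ENNReal.inv_ne_zero.mpr (ENNReal.natCast_ne_top n)) hε' M (T n) (hTm n)
      (fun t ht hsep => hnet t (ht.trans Set.inter_subset_left) hsep)
      (fun x hx => hx.2)
    calc ∫⁻ x in T n, (μ (closedBall x s))⁻¹ ∂μ
        ≤ M * (1 + (ε : ℝ≥0∞) / M) := hkey
      _ = M + M * ((ε : ℝ≥0∞) / M) := by rw [mul_add, mul_one]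
      _ = M + ε := by rw [ENNReal.mul_div_cancel hMne hMnt]
  calc ∫⁻ x in closedBall y s, (μ (closedBall x s))⁻¹ ∂μ
      ≤ ∫⁻ x in ⋃ n, T n, (μ (closedBall x s))⁻¹ ∂μ := lintegral_mono_set hUnion
    _ = ⨆ n, ∫⁻ x in T n, (μ (closedBall x s))⁻¹ ∂μ :=
        setLIntegral_iUnion_of_directed _ hTmono.directed_le
    _ ≤ M := iSup_le hTn

/-- If every strict `r`-net inside a closed `r`-ball has at most `M` points, then
for every `s > 0` the averaging operator satisfies `‖A_s f‖_{L¹} ≤ M ‖f‖_{L¹}`. -/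
theorem stmt5 {X : Type*} [MetricSpace X] [MeasurableSpace X] [BorelSpace X]
    (M : ℕ) (hM : 0 < M)
    (hnet : ∀ (x : X) (r : ℝ), 0 < r → ∀ t : Finset X,
      (↑t : Set X) ⊆ closedBall x r →
      (∀ a ∈ t, ∀ b ∈ t, a ≠ b → r < dist a b) → t.card ≤ M)
    (μ : Measure X)
    (hfin : ∀ s : Set X, Bornology.IsBounded s → μ s < ⊤)
    (hpos : ∀ U : Set X, IsOpen U → U.Nonempty → 0 < μ U) :
    ∀ s : ℝ, 0 < s → ∀ f : X → ℝ, Integrable f μ →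
      eLpNorm (avgOp μ s f) 1 μ ≤ (M : ℝ≥0∞) * eLpNorm f 1 μ := by
  intro s hs f hf
  rcases isEmpty_or_nonempty X with hX | hX
  · rw [μ.eq_zero_of_isEmpty]
    simp [eLpNorm_measure_zero]
  haveI : SigmaFinite μ := avg_sigmaFinite μ hfin
  haveI : SecondCountableTopology X := avg_secondCountable μ hpos
  set g : X → ℝ≥0∞ := fun x => μ (closedBall x s) with hgdef
  have hgm : Measurable g := avg_gMeas μ s
  have hg0 : ∀ x, g x ≠ 0 := fun x =>
    ((hpos (ball x s) isOpen_ball ⟨x, mem_ball_self hs⟩).trans_le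
      (measure_mono ball_subset_closedBall)).ne'
  have hgtop : ∀ x, g x ≠ ⊤ := fun x => (hfin _ isBounded_closedBall).ne
  obtain ⟨f', hf'm, hff'⟩ : ∃ f', StronglyMeasurable f' ∧ f =ᵐ[μ] f' :=
    ⟨hf.1.mk f, hf.1.stronglyMeasurable_mk, hf.1.ae_eq_mk⟩
  have hf'me : Measurable fun y => (‖f' y‖₊ : ℝ≥0∞) :=
    hf'm.measurable.nnnorm.coe_nnreal_ennreal
  have hpt : ∀ x, (‖avgOp μ s f x‖₊ : ℝ≥0∞)
      ≤ (g x)⁻¹ * ∫⁻ y in closedBall x s, ‖f' y‖₊ ∂μ := by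
    intro x
    have h1 : (‖avgOp μ s f x‖₊ : ℝ≥0∞)
        ≤ ENNReal.ofReal ((g x).toReal⁻¹) * ∫⁻ y in closedBall x s, ‖f y‖₊ ∂μ := by
      rw [avgOp]
      calc (‖(g x).toReal⁻¹ * ∫ y in closedBall x s, f y ∂μ‖₊ : ℝ≥0∞)
          = (‖(g x).toReal⁻¹‖₊ : ℝ≥0∞) * ‖∫ y in closedBall x s, f y ∂μ‖₊ := by
            rw [nnnorm_mul]; push_cast; ring
        _ ≤ ENNReal.ofReal ((g x).toReal⁻¹) * ∫⁻ y in closedBall x s, ‖f y‖₊ ∂μ := by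
            simp only [← enorm_eq_nnnorm]
            rw [Real.enorm_eq_ofReal (inv_nonneg.mpr ENNReal.toReal_nonneg)]
            exact mul_le_mul_right (enorm_integral_le_lintegral_enorm _) _
    have h2 : ENNReal.ofReal ((g x).toReal⁻¹) = (g x)⁻¹ := by
      rw [← ENNReal.toReal_inv, ENNReal.ofReal_toReal (by simp [hg0 x])]
    have h3 : ∫⁻ y in closedBall x s, ‖f y‖₊ ∂μ = ∫⁻ y in closedBall x s, ‖f' y‖₊ ∂μ :=
      lintegral_congr_ae (ae_restrict_of_ae (hff'.mono fun y hy => by simp only [hy]))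
    rw [h2, h3] at h1
    exact h1
  set F : X → X → ℝ≥0∞ := fun x y =>
    ({p : X × X | dist p.2 p.1 ≤ s}.indicator (fun p => (g p.1)⁻¹ * ‖f' p.2‖₊) (x, y)) with hF
  have hAm : MeasurableSet {p : X × X | dist p.2 p.1 ≤ s} :=
    (isClosed_le (continuous_snd.dist continuous_fst) continuous_const).measurableSet
  have hFm : Measurable (Function.uncurry F) := by
    have : Function.uncurry F =
        {p : X × X | dist p.2 p.1 ≤ s}.indicator (fun p => (g p.1)⁻¹ * ‖f' p.2‖₊) := rfl
    rw [this]
    exact Measurable.indicator ((hgm.comp measurable_fst).inv.mul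
      (hf'me.comp measurable_snd)) hAm
  have eqA : ∀ x, (g x)⁻¹ * ∫⁻ y in closedBall x s, ‖f' y‖₊ ∂μ = ∫⁻ y, F x y ∂μ := by
    intro x
    rw [← lintegral_const_mul _ hf'me, ← lintegral_indicator measurableSet_closedBall]
    apply lintegral_congr
    intro y
    by_cases hy : dist y x ≤ s <;>
      simp [hF, Set.indicator, mem_closedBall, hy]
  have eqB : ∀ y, ∫⁻ x, F x y ∂μ = (∫⁻ x in closedBall y s, (g x)⁻¹ ∂μ) * ‖f' y‖₊ := by
    intro y
    rw [← lintegral_mul_const (f := fun x => (g x)⁻¹) _ hgm.inv, ← lintegral_indicator measurableSet_closedBall]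
    apply lintegral_congr
    intro x
    by_cases hx : dist y x ≤ s
    · simp [hF, Set.indicator, mem_closedBall, hx, dist_comm y x]
    · simp [hF, Set.indicator, mem_closedBall, hx, dist_comm y x]
  calc eLpNorm (avgOp μ s f) 1 μ
      = ∫⁻ x, ‖avgOp μ s f x‖₊ ∂μ := eLpNorm_one_eq_lintegral_enorm
    _ ≤ ∫⁻ x, (g x)⁻¹ * ∫⁻ y in closedBall x s, ‖f' y‖₊ ∂μ ∂μ := lintegral_mono hpt
    _ = ∫⁻ x, ∫⁻ y, F x y ∂μ ∂μ := lintegral_congr eqA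
    _ = ∫⁻ y, ∫⁻ x, F x y ∂μ ∂μ := lintegral_lintegral_swap hFm.aemeasurable
    _ = ∫⁻ y, (∫⁻ x in closedBall y s, (g x)⁻¹ ∂μ) * ‖f' y‖₊ ∂μ := lintegral_congr eqB
    _ ≤ ∫⁻ y, (M : ℝ≥0∞) * ‖f' y‖₊ ∂μ := lintegral_mono fun y =>
        mul_le_mul_left
          (avg_Kbound μ M hM s hs hfin hpos y (fun t ht hsep => hnet y s hs t ht hsep)) _
    _ = (M : ℝ≥0∞) * ∫⁻ y, ‖f' y‖₊ ∂μ := lintegral_const_mul _ hf'me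
    _ = (M : ℝ≥0∞) * eLpNorm f 1 μ := by
        rw [eLpNorm_one_eq_lintegral_enorm]
        congr 1
        exact (lintegral_congr_ae (hff'.mono fun y hy => by simp only [hy, enorm_eq_nnnorm])).symm
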